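/- With the notation of the previous statement, there exists α > 0 such that for all K ≥ max{ γ(1-Λ/𝓜) - Λ/𝓜 + C_Γ²γ³Λ²/2 + (γ-1)/(2γ) + (γ/2)|1-Λ/𝓜|, (γ-1)/(2γ) + (γ/2)|1-Λ/𝓜| }, and all U = (T,P) ∈ H¹(Ω) × H¹(Ω): Re[a(U,U)] + K(‖T‖² + ‖P‖²) ≥ α(‖T‖²_{H¹} + ‖P‖²_{H¹}). -/

import Mathlib

/-- The real part of the Morse-Ingard form `a(U,U)` for `U = (T,P)`, expressed in
terms of the `L²` norms `‖T‖, ‖P‖`, the gradient norms `gradN T, gradN P`, the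
boundary norm `bdryN P = ‖P‖_{Γ_a}`, and the `L²` inner product (paper's
`(P,T) = ∫ P T̄` equals Mathlib's `inner T P`). -/
noncomputable def ReMorseIngard {V : Type*} [NormedAddCommGroup V]
    [InnerProductSpace ℂ V] (γ Λ 𝓜 : ℝ) (gradN bdryN : V → ℝ) (T P : V) : ℝ :=
  𝓜 * (gradN T) ^ 2 + (gradN P) ^ 2 - (γ * (1 - Λ / 𝓜) - Λ / 𝓜) * ‖P‖ ^ 2
    - γ ^ ((3 : ℝ) / 2) * Λ * (bdryN P) ^ 2
    + (Complex.I * (((γ : ℂ) - 1) / (γ : ℂ)) * (inner ℂ T P : ℂ) +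
        ((γ * (1 - Λ / 𝓜) : ℝ) : ℂ) * (inner ℂ P T : ℂ)).re


set_option maxHeartbeats 1000000 in
private lemma stmt11_aux1 (a b x y s n m : ℝ) (hs : s ^ 2 = a ^ 2 + b ^ 2) (hs0 : 0 ≤ s)
    (hn0 : 0 ≤ n) (hxy : x ^ 2 + y ^ 2 = n ^ 2) (hnm : n ≤ m) : -(s * m) ≤ b * x - a * y := by
  have h1 : (b * x - a * y) ^ 2 ≤ (s * n) ^ 2 := by nlinarith [sq_nonneg (a * x + b * y)]
  have h2 : -(s * n) ≤ b * x - a * y := by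
    nlinarith [sq_nonneg (b * x - a * y + s * n), mul_nonneg hs0 hn0]
  have h3 : s * n ≤ s * m := mul_le_mul_of_nonneg_left hnm hs0
  linarith

set_option maxHeartbeats 1000000 in
private lemma stmt11_aux2 (d g p : ℝ) : d * g * p ≤ g ^ 2 / 2 + d ^ 2 * p ^ 2 / 2 := by
  nlinarith [sq_nonneg (g - d * p)]

/-- the Gårding inequality for the Morse-Ingard form: there is
`α > 0` such that for all `K` at least the stated maximum and all `U = (T,P)`,
`Re a(U,U) + K(‖T‖² + ‖P‖²) ≥ α(‖T‖²_{H¹} + ‖P‖²_{H¹})`, where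
`‖u‖²_{H¹} = ‖u‖² + ‖∇u‖²`. -/
theorem stmt11 {V : Type*} [NormedAddCommGroup V] [InnerProductSpace ℂ V]
    (γ Λ 𝓜 CΓ : ℝ) (gradN bdryN : V → ℝ)
    (hγ : 1 < γ) (hΛ : 0 < Λ) (hΛ𝓜 : Λ < 𝓜) (h𝓜 : 𝓜 ≤ 1) (hCΓ : 0 < CΓ)
    (hgrad : ∀ u, 0 ≤ gradN u) (hbdry : ∀ u, 0 ≤ bdryN u)
    (htrace : ∀ P : V, (bdryN P) ^ 2 ≤ CΓ * gradN P * ‖P‖) :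
    ∃ α : ℝ, 0 < α ∧ ∀ K : ℝ,
      max (γ * (1 - Λ / 𝓜) - Λ / 𝓜 + CΓ ^ 2 * γ ^ 3 * Λ ^ 2 / 2 +
            (γ - 1) / (2 * γ) + (γ / 2) * |1 - Λ / 𝓜|)
          ((γ - 1) / (2 * γ) + (γ / 2) * |1 - Λ / 𝓜|) ≤ K →
      ∀ T P : V,
        ReMorseIngard γ Λ 𝓜 gradN bdryN T P + K * (‖T‖ ^ 2 + ‖P‖ ^ 2) ≥
          α * ((‖T‖ ^ 2 + (gradN T) ^ 2) + (‖P‖ ^ 2 + (gradN P) ^ 2)) := by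
  have hγ0 : (0:ℝ) < γ := by linarith
  have h𝓜0 : (0:ℝ) < 𝓜 := lt_trans hΛ hΛ𝓜
  have hr : Λ / 𝓜 < 1 := (div_lt_one h𝓜0).2 hΛ𝓜
  have hr0 : 0 < Λ / 𝓜 := div_pos hΛ h𝓜0
  set c1 : ℝ := (γ - 1) / γ with hc1def
  set c2 : ℝ := γ * (1 - Λ / 𝓜) with hc2def
  set s : ℝ := Real.sqrt (c1 ^ 2 + c2 ^ 2) with hsdef
  set δ : ℝ := (c1 + c2 - s) / 2 with hδdef
  clear_value c1 c2 s δ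
  have hc1 : 0 < c1 := by rw [hc1def]; exact div_pos (by linarith) hγ0
  have hc2 : 0 < c2 := by rw [hc2def]; exact mul_pos hγ0 (by linarith)
  have hs0 : 0 ≤ s := by rw [hsdef]; positivity
  have hs2 : s ^ 2 = c1 ^ 2 + c2 ^ 2 := by rw [hsdef]; exact Real.sq_sqrt (by positivity)
  have hs_lt : s < c1 + c2 := by nlinarith [hs2, hs0, hc1, hc2]
  have hδ : 0 < δ := by rw [hδdef]; linarith
  refine ⟨min 𝓜 (min (1/2) δ), by positivity, ?_⟩
  intro K hK T P
  have hK1 : c2 - Λ / 𝓜 + CΓ ^ 2 * γ ^ 3 * Λ ^ 2 / 2 +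
      (γ - 1) / (2 * γ) + (γ / 2) * |1 - Λ / 𝓜| ≤ K :=
    le_trans (le_max_left _ _) hK
  have hK2 : (γ - 1) / (2 * γ) + (γ / 2) * |1 - Λ / 𝓜| ≤ K :=
    le_trans (le_max_right _ _) hK
  have habs : |1 - Λ / 𝓜| = 1 - Λ / 𝓜 := abs_of_pos (by linarith)
  rw [habs] at hK1 hK2
  have hhalf : (γ - 1) / (2 * γ) + (γ / 2) * (1 - Λ / 𝓜) = (c1 + c2) / 2 := by
    rw [hc1def, hc2def]; field_simp
  have hK1' : c2 - Λ / 𝓜 + CΓ ^ 2 * γ ^ 3 * Λ ^ 2 / 2 + (c1 + c2) / 2 ≤ K := by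
    rw [hc2def]; linarith
  have hK2' : (c1 + c2) / 2 ≤ K := by linarith
  clear hK1 hK2
  -- real part bound
  set z : ℂ := (inner ℂ T P : ℂ) with hzdef
  have hconj : (inner ℂ P T : ℂ) = starRingEnd ℂ z := (inner_conj_symm P T).symm
  have hznorm : ‖z‖ ≤ ‖T‖ * ‖P‖ := norm_inner_le_norm T P
  clear_value z
  have hzsq : z.re ^ 2 + z.im ^ 2 = ‖z‖ ^ 2 := by
    rw [Complex.sq_norm, Complex.normSq_apply]; ring
  have hre : (Complex.I * (((γ : ℂ) - 1) / (γ : ℂ)) * z +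
      ((γ * (1 - Λ / 𝓜) : ℝ) : ℂ) * (inner ℂ P T : ℂ)).re = c2 * z.re - c1 * z.im := by
    rw [hconj]
    have : (((γ : ℂ) - 1) / (γ : ℂ)) = ((c1 : ℝ) : ℂ) := by
      rw [hc1def]; push_cast; ring
    rw [this]
    simp [Complex.ext_iff, Complex.mul_re, Complex.mul_im]
    rw [hc2def]; ring
  have hre_bd : c2 * z.re - c1 * z.im ≥ -(s * (‖T‖ * ‖P‖)) :=
    stmt11_aux1 c1 c2 z.re z.im s ‖z‖ (‖T‖ * ‖P‖) hs2 hs0 (norm_nonneg z) hzsq hznorm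
  -- boundary bound
  have hg32 : (γ ^ ((3:ℝ)/2)) ^ 2 = γ ^ 3 := by
    rw [← Real.rpow_natCast (γ ^ ((3:ℝ)/2)) 2, ← Real.rpow_mul hγ0.le]
    norm_num
  have hg32pos : 0 < γ ^ ((3:ℝ)/2) := Real.rpow_pos_of_pos hγ0 _
  have hbdry_bd : γ ^ ((3:ℝ)/2) * Λ * (bdryN P) ^ 2 ≤
      (1/2) * (gradN P) ^ 2 + (CΓ ^ 2 * γ ^ 3 * Λ ^ 2 / 2) * ‖P‖ ^ 2 := by
    have h1 : γ ^ ((3:ℝ)/2) * Λ * (bdryN P) ^ 2 ≤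
        γ ^ ((3:ℝ)/2) * Λ * (CΓ * gradN P * ‖P‖) := by
      apply mul_le_mul_of_nonneg_left (htrace P) (by positivity)
    have h2 : γ ^ ((3:ℝ)/2) * Λ * (CΓ * gradN P * ‖P‖) ≤
        (gradN P) ^ 2 / 2 + (CΓ * γ ^ ((3:ℝ)/2) * Λ) ^ 2 * ‖P‖ ^ 2 / 2 := by
      have := stmt11_aux2 (CΓ * γ ^ ((3:ℝ)/2) * Λ) (gradN P) ‖P‖
      linarith [this]
    have e : (CΓ * γ ^ ((3:ℝ)/2) * Λ) ^ 2 = CΓ ^ 2 * γ ^ 3 * Λ ^ 2 := by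
      rw [mul_pow, mul_pow, hg32]
    rw [e] at h2
    linarith [h1, h2]
  -- Cauchy: s * t * p ≤ (s/2)(t²+p²)
  have htp : ‖T‖ * ‖P‖ ≤ (‖T‖ ^ 2 + ‖P‖ ^ 2) / 2 := by
    linarith [two_mul_le_add_sq ‖T‖ ‖P‖]
  have hyoung : s * (‖T‖ * ‖P‖) ≤ s * ((‖T‖ ^ 2 + ‖P‖ ^ 2) / 2) :=
    mul_le_mul_of_nonneg_left htp hs0
  -- assemble
  rw [ReMorseIngard, ← hzdef, hre, ← hc2def]
  have hαm : min 𝓜 (min (1/2) δ) ≤ 𝓜 := min_le_left _ _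
  have hαh : min 𝓜 (min (1/2) δ) ≤ 1/2 := le_trans (min_le_right _ _) (min_le_left _ _)
  have hαδ : min 𝓜 (min (1/2) δ) ≤ δ := le_trans (min_le_right _ _) (min_le_right _ _)
  have hA : (δ + s / 2) * ‖T‖ ^ 2 ≤ K * ‖T‖ ^ 2 :=
    mul_le_mul_of_nonneg_right (by rw [hδdef]; linarith) (sq_nonneg _)
  have hB : (δ + (c2 - Λ / 𝓜) + CΓ ^ 2 * γ ^ 3 * Λ ^ 2 / 2 + s / 2) * ‖P‖ ^ 2 ≤ K * ‖P‖ ^ 2 :=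
    mul_le_mul_of_nonneg_right (by rw [hδdef]; linarith) (sq_nonneg _)
  have h5 := mul_le_mul_of_nonneg_right hαm (sq_nonneg (gradN T))
  have h6 := mul_le_mul_of_nonneg_right hαh (sq_nonneg (gradN P))
  have h7 := mul_le_mul_of_nonneg_right hαδ (sq_nonneg ‖T‖)
  have h8 := mul_le_mul_of_nonneg_right hαδ (sq_nonneg ‖P‖)
  linarith [hre_bd, hbdry_bd, hyoung, hA, hB, h5, h6, h7, h8]
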